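/- For a table φ_1, …, φ_n with MISO point w, fix any index j, perform the MISO update with index j (replace φ_j by w), and let w' be the recomputed MISO point. Then ‖w' − w‖ ≤ (1 − μ/(μ + L)) · (1/n) · ‖w − φ_j‖. -/

import Mathlib

open scoped RealInnerProductSpace

section Aux

variable {E : Type*} [NormedAddCommGroup E] [InnerProductSpace ℝ E] [CompleteSpace E]

lemma line_hasDerivAt (f : E → ℝ) (g : E → E) (hg : ∀ x, HasGradientAt f (g x) x)
    (y v : E) (t : ℝ) :
    HasDerivAt (fun t : ℝ => f (y + t • v)) ⟪g (y + t • v), v⟫ t := by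
  have h1 : HasDerivAt (fun t : ℝ => y + t • v) v t := by
    simpa using ((hasDerivAt_id t).smul_const v).const_add y
  have h2 := (hg (y + t • v)).hasFDerivAt
  have h3 := h2.comp_hasDerivAt t h1
  simp at h3
  exact h3

lemma descent_lemma (f : E → ℝ) (g : E → E) {L : ℝ} (hL : 0 ≤ L)
    (hg : ∀ x, HasGradientAt f (g x) x)
    (hlip : ∀ x y, ‖g x - g y‖ ≤ L * ‖x - y‖) (x y : E) :
    f x ≤ f y + ⟪g y, x - y⟫ + L / 2 * ‖x - y‖ ^ 2 := by
  set v := x - y with hv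
  set G : ℝ → ℝ := fun t => f (y + t • v) - t * ⟪g y, v⟫ - L / 2 * ‖v‖ ^ 2 * t ^ 2 with hG
  have hder : ∀ t : ℝ, HasDerivAt G (⟪g (y + t • v) - g y, v⟫ - L * ‖v‖ ^ 2 * t) t := by
    intro t
    have h1 := line_hasDerivAt f g hg y v t
    have h2 : HasDerivAt (fun t : ℝ => t * ⟪g y, v⟫) ⟪g y, v⟫ t := by
      simpa using (hasDerivAt_id t).mul_const ⟪g y, v⟫
    have h3 : HasDerivAt (fun t : ℝ => L / 2 * ‖v‖ ^ 2 * t ^ 2) (L / 2 * ‖v‖ ^ 2 * (2 * t)) t := by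
      simpa using ((hasDerivAt_pow 2 t).const_mul (L / 2 * ‖v‖ ^ 2))
    have := (h1.sub h2).sub h3
    convert this using 1
    · rfl
    · rfl
    · rfl
    rw [inner_sub_left]
    ring
  have hanti : AntitoneOn G (Set.Icc (0:ℝ) 1) := by
    apply antitoneOn_of_hasDerivWithinAt_nonpos (convex_Icc 0 1)
      (fun t _ => (hder t).continuousAt.continuousWithinAt)
      (fun t _ => (hder t).hasDerivWithinAt)
    intro t ht
    rw [interior_Icc] at ht
    have ht0 : 0 < t := ht.1
    have h1 : ⟪g (y + t • v) - g y, v⟫ ≤ ‖g (y + t • v) - g y‖ * ‖v‖ :=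
      real_inner_le_norm _ _
    have h2 : ‖g (y + t • v) - g y‖ ≤ L * (t * ‖v‖) := by
      have := hlip (y + t • v) y
      simpa [norm_smul, abs_of_pos ht0] using this
    have h3 : ‖g (y + t • v) - g y‖ * ‖v‖ ≤ L * (t * ‖v‖) * ‖v‖ :=
      mul_le_mul_of_nonneg_right h2 (norm_nonneg v)
    nlinarith [norm_nonneg v]
  have := hanti (Set.left_mem_Icc.2 zero_le_one) (Set.right_mem_Icc.2 zero_le_one) zero_le_one
  simp only [hG] at this
  have e0 : y + (0:ℝ) • v = y := by simp
  have e1 : y + (1:ℝ) • v = x := by simp [hv]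
  rw [e0, e1] at this
  nlinarith [this]

/-- Abstract cocoercivity from convexity + descent inequality. -/
lemma cocoercive {h : E → ℝ} {g : E → E} {M : ℝ} (hM : 0 ≤ M)
    (hconv : ∀ x y, h y + ⟪g y, x - y⟫ ≤ h x)
    (hdesc : ∀ x y, h x ≤ h y + ⟪g y, x - y⟫ + M / 2 * ‖x - y‖ ^ 2)
    (x y : E) : ‖g x - g y‖ ^ 2 ≤ M * ⟪g x - g y, x - y⟫ := by
  set Δ := g x - g y with hΔ
  have key : ∀ t : ℝ, 2 * t * ‖Δ‖ ^ 2 ≤ ⟪Δ, x - y⟫ + M * t ^ 2 * ‖Δ‖ ^ 2 := by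
    intro t
    have one : ∀ (s : ℝ) (a b : E), s * (⟪g a, Δ⟫ - ⟪g b, Δ⟫) ≤ h a - h b - ⟪g b, a - b⟫ + M * s ^ 2 / 2 * ‖Δ‖ ^ 2 := by
      intro s a b
      have hd := hdesc (a - s • Δ) a
      have hc := hconv (a - s • Δ) b
      have e1 : a - s • Δ - a = -(s • Δ) := by abel
      have e2 : a - s • Δ - b = (a - b) - s • Δ := by abel
      rw [e1] at hd
      rw [e2] at hc
      rw [inner_neg_right, inner_smul_right] at hd
      rw [inner_sub_right, inner_smul_right] at hc
      have e3 : ‖-(s • Δ)‖ ^ 2 = s ^ 2 * ‖Δ‖ ^ 2 := by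
        rw [norm_neg, norm_smul, mul_pow]
        simp [sq_abs]
      rw [e3] at hd
      have hcomb : h b + (⟪g b, a - b⟫ - s * ⟪g b, Δ⟫) ≤ h a + -(s * ⟪g a, Δ⟫) + M / 2 * (s ^ 2 * ‖Δ‖ ^ 2) := le_trans hc hd
      linarith [hcomb]
    have h1 := one t x y
    have h2 := one (-t) y x
    have hsq : (-t) ^ 2 = t ^ 2 := by ring
    rw [hsq] at h2
    have e4 : ⟪g x, Δ⟫ - ⟪g y, Δ⟫ = ‖Δ‖ ^ 2 := by
      rw [← inner_sub_left, ← hΔ, real_inner_self_eq_norm_sq]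
    have e5 : ⟪g y, Δ⟫ - ⟪g x, Δ⟫ = -(‖Δ‖ ^ 2) := by
      rw [← neg_sub, e4]
    rw [e4] at h1
    rw [e5, neg_mul_neg] at h2
    have e6 : ⟪g x, y - x⟫ + ⟪g y, x - y⟫ = -⟪Δ, x - y⟫ := by
      rw [hΔ, inner_sub_left, show (y - x : E) = -(x - y) by abel, inner_neg_right]
      ring
    linarith [h1, h2, e6]
  rcases eq_or_lt_of_le hM with hM0 | hMpos
  · -- M = 0
    subst hM0
    rw [zero_mul]
    by_contra hpos
    push_neg at hpos
    have hΔpos : 0 < ‖Δ‖ ^ 2 := hpos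
    set t0 : ℝ := (⟪Δ, x - y⟫ + 1) / (2 * ‖Δ‖ ^ 2) with ht0
    have hk := key t0
    rw [zero_mul, zero_mul, add_zero] at hk
    have heq : 2 * t0 * ‖Δ‖ ^ 2 = ⟪Δ, x - y⟫ + 1 := by
      have hΔne : ‖Δ‖ ≠ 0 := by intro h0; rw [h0] at hΔpos; norm_num at hΔpos
      rw [ht0]
      field_simp
    linarith
  · have hk := key (1 / M)
    have hMne : M ≠ 0 := ne_of_gt hMpos
    have hmul : M * (2 * (1 / M) * ‖Δ‖ ^ 2) ≤ M * (⟪Δ, x - y⟫ + M * (1 / M) ^ 2 * ‖Δ‖ ^ 2) :=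
      mul_le_mul_of_nonneg_left hk hM
    have e1 : M * (2 * (1 / M) * ‖Δ‖ ^ 2) = 2 * ‖Δ‖ ^ 2 := by field_simp
    have e2 : M * (⟪Δ, x - y⟫ + M * (1 / M) ^ 2 * ‖Δ‖ ^ 2) = M * ⟪Δ, x - y⟫ + ‖Δ‖ ^ 2 := by
      field_simp
    rw [e1, e2] at hmul
    linarith

end Aux

/-- The MISO point associated with a table `φ`. -/
noncomputable def misoW (d n : ℕ) (L : ℝ)
    (f' : Fin n → EuclideanSpace ℝ (Fin d) → EuclideanSpace ℝ (Fin d))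
    (φ : Fin n → EuclideanSpace ℝ (Fin d)) : EuclideanSpace ℝ (Fin d) :=
  (1 / (n : ℝ)) • ∑ i, φ i - (1 / (L * n)) • ∑ i, f' i (φ i)

set_option maxHeartbeats 1000000 in
theorem miso_descent_lemma (d n : ℕ) (hn : 1 ≤ n) (μ L : ℝ)
    (hμ : 0 < μ) (hμL : μ ≤ L)
    (f : Fin n → EuclideanSpace ℝ (Fin d) → ℝ)
    (f' : Fin n → EuclideanSpace ℝ (Fin d) → EuclideanSpace ℝ (Fin d))
    (hgrad : ∀ i x, HasGradientAt (f i) (f' i x) x)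
    (hsmooth : ∀ i x y, ‖f' i x - f' i y‖ ≤ L * ‖x - y‖)
    (hsc : ∀ i x y, f i x ≥ f i y + ⟪f' i y, x - y⟫ + μ / 2 * ‖x - y‖ ^ 2)
    (φ : Fin n → EuclideanSpace ℝ (Fin d)) (j : Fin n) :
    ‖misoW d n L f' (Function.update φ j (misoW d n L f' φ)) - misoW d n L f' φ‖
      ≤ (1 - μ / (μ + L)) * (1 / (n : ℝ)) * ‖misoW d n L f' φ - φ j‖ := by
  have hL : 0 < L := lt_of_lt_of_le hμ hμL
  -- Step 1: algebraic identity
  have hsum1 : ∀ p : EuclideanSpace ℝ (Fin d),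
      ∑ i, Function.update φ j p i = p + ∑ i ∈ Finset.univ \ {j}, φ i :=
    fun p => Finset.sum_update_of_mem (Finset.mem_univ j) φ p
  have hsum1' : ∑ i, φ i = φ j + ∑ i ∈ Finset.univ \ {j}, φ i := by
    have := Finset.sum_update_of_mem (Finset.mem_univ j) φ (φ j)
    simpa [Function.update_eq_self] using this
  have hsum2 : ∀ p : EuclideanSpace ℝ (Fin d),
      ∑ i, f' i (Function.update φ j p i)
        = f' j p + ∑ i ∈ Finset.univ \ {j}, f' i (φ i) := by
    intro p
    have hfun : (fun i => f' i (Function.update φ j p i))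
        = Function.update (fun i => f' i (φ i)) j (f' j p) := by
      funext i
      by_cases hij : i = j
      · subst hij; simp
      · simp [Function.update_of_ne hij]
    rw [show (∑ i, f' i (Function.update φ j p i)) = ∑ i, Function.update (fun i => f' i (φ i)) j (f' j p) i by rw [hfun]]
    exact Finset.sum_update_of_mem (Finset.mem_univ j) _ _
  have hsum2' : ∑ i, f' i (φ i) = f' j (φ j) + ∑ i ∈ Finset.univ \ {j}, f' i (φ i) := by
    have := Finset.sum_update_of_mem (Finset.mem_univ j) (fun i => f' i (φ i)) (f' j (φ j))
    simpa [Function.update_eq_self] using this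
  have hLn : (1 / ((n:ℝ))) * (1 / L) = 1 / (L * (n:ℝ)) := by
    rw [one_div_mul_one_div, mul_comm]
  have halg : ∀ p : EuclideanSpace ℝ (Fin d),
      misoW d n L f' (Function.update φ j p) - misoW d n L f' φ
        = (1 / (n : ℝ)) • ((p - φ j) - (1 / L) • (f' j p - f' j (φ j))) := by
    intro p
    simp only [misoW, hsum1 p, hsum2 p, hsum1', hsum2']
    simp only [smul_sub, smul_add, smul_smul, hLn]
    abel
  set w := misoW d n L f' φ with hw
  set u := w - φ j with hu
  set Δ := f' j w - f' j (φ j) with hΔ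
  have halg' : misoW d n L f' (Function.update φ j w) - w
      = (1 / (n : ℝ)) • (u - (1 / L) • Δ) := halg w
  rw [halg']
  rw [norm_smul]
  have hn0 : (0:ℝ) < (n:ℝ) := by exact_mod_cast hn
  rw [Real.norm_eq_abs, abs_of_pos (by positivity : (0:ℝ) < 1 / (n:ℝ))]
  rw [mul_comm (1 - μ / (μ + L)) (1 / (n:ℝ)), mul_assoc]
  apply mul_le_mul_of_nonneg_left _ (by positivity : (0:ℝ) ≤ 1 / (n:ℝ))
  -- Step 2: coercivity
  have hcoer : ‖Δ‖ ^ 2 + μ * L * ‖u‖ ^ 2 ≤ (L + μ) * ⟪Δ, u⟫ := by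
    set g : EuclideanSpace ℝ (Fin d) → EuclideanSpace ℝ (Fin d) := fun x => f' j x - μ • x with hg
    set h : EuclideanSpace ℝ (Fin d) → ℝ := fun x => f j x - μ / 2 * ‖x‖ ^ 2 with hh
    have hexp : ∀ x y : EuclideanSpace ℝ (Fin d),
        h y + ⟪g y, x - y⟫ = f j y + ⟪f' j y, x - y⟫ + μ / 2 * ‖x - y‖ ^ 2 - μ / 2 * ‖x‖ ^ 2 := by
      intro x y
      simp only [hh, hg, inner_sub_left, real_inner_smul_left, inner_sub_right]
      have := @norm_sub_sq_real (EuclideanSpace ℝ (Fin d)) _ _ x y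
      have hyx : ⟪y, x⟫ = ⟪x, y⟫ := real_inner_comm x y
      have hyy : ⟪y, y⟫ = ‖y‖ ^ 2 := real_inner_self_eq_norm_sq y
      rw [hyx, hyy]
      nlinarith [this]
    have hconv : ∀ x y : EuclideanSpace ℝ (Fin d), h y + ⟪g y, x - y⟫ ≤ h x := by
      intro x y
      rw [hexp x y]
      have := hsc j x y
      simp only [hh]
      linarith
    have hdesc : ∀ x y : EuclideanSpace ℝ (Fin d),
        h x ≤ h y + ⟪g y, x - y⟫ + (L - μ) / 2 * ‖x - y‖ ^ 2 := by
      intro x y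
      rw [hexp x y]
      have := descent_lemma (f j) (f' j) (le_of_lt hL) (hgrad j) (hsmooth j) x y
      simp only [hh]
      nlinarith [this]
    have hco := cocoercive (by linarith : (0:ℝ) ≤ L - μ) hconv hdesc w (φ j)
    have hgd : g w - g (φ j) = Δ - μ • u := by
      simp only [hg, hΔ, hu, smul_sub]
      abel
    rw [hgd, ← hu] at hco
    have e1 : ‖Δ - μ • u‖ ^ 2 = ‖Δ‖ ^ 2 - 2 * (μ * ⟪Δ, u⟫) + μ ^ 2 * ‖u‖ ^ 2 := by
      rw [norm_sub_sq_real, real_inner_smul_right, norm_smul, mul_pow, Real.norm_eq_abs, sq_abs]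
    have e2 : ⟪Δ - μ • u, u⟫ = ⟪Δ, u⟫ - μ * ‖u‖ ^ 2 := by
      rw [inner_sub_left, real_inner_smul_left, real_inner_self_eq_norm_sq]
    rw [e1, e2] at hco
    nlinarith [hco]
  -- Step 3: norm bound
  have hT : ‖u - (1 / L) • Δ‖ ^ 2 ≤ ((1 - μ / (μ + L)) * ‖u‖) ^ 2 := by
    have e1 : ‖u - (1 / L) • Δ‖ ^ 2
        = ‖u‖ ^ 2 - 2 * ((1 / L) * ⟪u, Δ⟫) + (1 / L) ^ 2 * ‖Δ‖ ^ 2 := by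
      rw [norm_sub_sq_real, real_inner_smul_right, norm_smul, mul_pow, Real.norm_eq_abs, sq_abs]
    have hud : ⟪u, Δ⟫ = ⟪Δ, u⟫ := real_inner_comm Δ u
    rw [e1, hud]
    have hμL0 : (0:ℝ) < μ + L := by linarith
    have hfrac : 1 - μ / (μ + L) = L / (μ + L) := by field_simp; ring
    rw [hfrac]
    have key : ‖u‖ ^ 2 - 2 * ((1 / L) * ⟪Δ, u⟫) + (1 / L) ^ 2 * ‖Δ‖ ^ 2
        ≤ (L / (μ + L)) ^ 2 * ‖u‖ ^ 2 := by
      have hco := hcoer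
      have hL2 : (0:ℝ) < L ^ 2 := by positivity
      have hgoal : (μ + L) * L ^ 2 * (‖u‖ ^ 2 - 2 * ((1 / L) * ⟪Δ, u⟫) + (1 / L) ^ 2 * ‖Δ‖ ^ 2)
          ≤ (μ + L) * L ^ 2 * ((L / (μ + L)) ^ 2 * ‖u‖ ^ 2) := by
        have lhs_eq : (μ + L) * L ^ 2 * (‖u‖ ^ 2 - 2 * ((1 / L) * ⟪Δ, u⟫) + (1 / L) ^ 2 * ‖Δ‖ ^ 2)
            = (μ + L) * L ^ 2 * ‖u‖ ^ 2 - 2 * L * (μ + L) * ⟪Δ, u⟫ + (μ + L) * ‖Δ‖ ^ 2 := by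
          field_simp
        have rhs_eq : (μ + L) * L ^ 2 * ((L / (μ + L)) ^ 2 * ‖u‖ ^ 2)
            = L ^ 4 / (μ + L) * ‖u‖ ^ 2 := by
          field_simp
        rw [lhs_eq, rhs_eq]
        -- use coercivity: (L+μ)⟪Δ,u⟫ ≥ ‖Δ‖² + μL‖u‖²
        have h1 : 2 * L * ((L + μ) * ⟪Δ, u⟫) ≥ 2 * L * (‖Δ‖ ^ 2 + μ * L * ‖u‖ ^ 2) :=
          mul_le_mul_of_nonneg_left hco (by positivity)
        have h2 : (μ + L) * ‖Δ‖ ^ 2 - 2 * L * ‖Δ‖ ^ 2 = (μ - L) * ‖Δ‖ ^ 2 := by ring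
        have h3 : (μ - L) * ‖Δ‖ ^ 2 ≤ 0 :=
          mul_nonpos_of_nonpos_of_nonneg (by linarith) (by positivity)
        have h4 : (μ + L) * L ^ 2 * ‖u‖ ^ 2 - 2 * L * (μ * L * ‖u‖ ^ 2)
            = L ^ 2 * (L - μ) * ‖u‖ ^ 2 := by ring
        have h5 : L ^ 2 * (L - μ) * ‖u‖ ^ 2 ≤ L ^ 4 / (μ + L) * ‖u‖ ^ 2 := by
          apply mul_le_mul_of_nonneg_right _ (by positivity : (0:ℝ) ≤ ‖u‖ ^ 2)
          rw [le_div_iff₀ hμL0]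
          nlinarith [sq_nonneg μ, hμ.le, hL.le]
        nlinarith [h1, h3, h5]
      have hpos : (0:ℝ) < (μ + L) * L ^ 2 := by positivity
      exact le_of_mul_le_mul_left hgoal hpos
    calc ‖u‖ ^ 2 - 2 * ((1 / L) * ⟪Δ, u⟫) + (1 / L) ^ 2 * ‖Δ‖ ^ 2
        ≤ (L / (μ + L)) ^ 2 * ‖u‖ ^ 2 := key
    _ = (L / (μ + L) * ‖u‖) ^ 2 := by ring
  have hc0 : 0 ≤ (1 - μ / (μ + L)) * ‖u‖ := by
    have hμL0 : (0:ℝ) < μ + L := by linarith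
    have : μ / (μ + L) ≤ 1 := by
      rw [div_le_one hμL0]; linarith
    have := sub_nonneg.2 this
    positivity
  exact le_of_pow_le_pow_left₀ (by norm_num) hc0 hT
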